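/- Let H be a numerical semigroup, k a field, 0 ≠ α ∈ k, and R = k[H]. Then for all positive a, b ∈ H with gcd(a,b) = 1, the maximal ideal M_α = (α^{a_i} − t^{a_i} : 1 ≤ i ≤ v) of R (where a₁,...,a_v generate H) equals (α^a − t^a, α^b − t^b). -/

import Mathlib

open Polynomial

private lemma key_identity {k : Type*} [Field k] (α : k) (m n : ℕ) :
    C (α ^ (m + n)) - (X : Polynomial k) ^ (m + n) =
      C (α ^ m) * (C (α ^ n) - X ^ n) + X ^ n * (C (α ^ m) - X ^ m) := by
  rw [pow_add, C_mul, pow_add]; ring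

private lemma rep_lemma {a b : ℕ} (ha : 0 < a) (hb : 0 < b) (hab : Nat.gcd a b = 1)
    {m : ℕ} (hm : a * b ≤ m) : m ∈ AddSubmonoid.closure ({a, b} : Set ℕ) := by
  have haS : a ∈ AddSubmonoid.closure ({a, b} : Set ℕ) :=
    AddSubmonoid.subset_closure (Or.inl rfl)
  have hbS : b ∈ AddSubmonoid.closure ({a, b} : Set ℕ) :=
    AddSubmonoid.subset_closure (Or.inr rfl)
  rcases eq_or_lt_of_le (show 1 ≤ a from ha) with h1 | h1
  · have h : m • a = m := by rw [smul_eq_mul, ← h1]; omega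
    exact h ▸ nsmul_mem haS m
  rcases eq_or_lt_of_le (show 1 ≤ b from hb) with h2 | h2
  · have h : m • b = m := by rw [smul_eq_mul, ← h2]; omega
    exact h ▸ nsmul_mem hbS m
  by_contra h
  have hub := (frobeniusNumber_pair hab h1 h2).2 h
  have hmn : a + b ≤ a * b := add_le_mul h1 h2
  omega

private lemma mem_ideal_of_closure {k : Type*} [Field k] (H : AddSubmonoid ℕ)
    (R : Subalgebra k (Polynomial k))
    (hX : ∀ n ∈ H, ((X : Polynomial k) ^ n) ∈ R)
    (hC : ∀ c : k, (C c : Polynomial k) ∈ R)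
    (α : k) (I : Ideal R) (T : Set ℕ) (hT : T ⊆ (H : Set ℕ))
    (hgen : ∀ s ∈ T, ∀ x : R, (x : Polynomial k) = C (α ^ s) - X ^ s → x ∈ I)
    {n : ℕ} (hn : n ∈ AddSubmonoid.closure T) :
    ∀ x : R, (x : Polynomial k) = C (α ^ n) - X ^ n → x ∈ I := by
  have hTH : AddSubmonoid.closure T ≤ H := AddSubmonoid.closure_le.mpr hT
  induction hn using AddSubmonoid.closure_induction with
  | mem s hs => exact hgen s hs
  | zero =>
    intro x hx
    have : x = 0 := by
      apply Subtype.ext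
      simpa using hx
    rw [this]; exact I.zero_mem
  | add m n hm hn ihm ihn =>
    intro x hx
    have hmH : m ∈ H := hTH hm
    have hnH : n ∈ H := hTH hn
    set y : R := ⟨C (α ^ n) - X ^ n, sub_mem (hC _) (hX n hnH)⟩ with hy
    set z : R := ⟨C (α ^ m) - X ^ m, sub_mem (hC _) (hX m hmH)⟩ with hz
    have hyI : y ∈ I := ihn y rfl
    have hzI : z ∈ I := ihm z rfl
    have hxeq : x = (⟨C (α ^ m), hC _⟩ : R) * y + (⟨X ^ n, hX n hnH⟩ : R) * z := by
      apply Subtype.ext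
      push_cast
      rw [hx, key_identity]
    rw [hxeq]
    exact I.add_mem (I.mul_mem_left _ hyI) (I.mul_mem_left _ hzI)

/-- for a numerical semigroup `H = ⟨a₁,…,a_v⟩`, `R = k[H]`, `0 ≠ α ∈ k`,
and positive `a, b ∈ H` with `gcd(a,b) = 1`, the maximal ideal
`M_α = (α^{aᵢ} − t^{aᵢ} : 1 ≤ i ≤ v)` equals `(α^a − t^a, α^b − t^b)`. -/
theorem rational_max_ideal_two_generated
    (k : Type*) [Field k] (H : AddSubmonoid ℕ) (hfin : ((H : Set ℕ)ᶜ).Finite)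
    (v : ℕ) (aa : Fin v → ℕ) (haa : AddSubmonoid.closure (Set.range aa) = H)
    (R : Subalgebra k (Polynomial k))
    (hRdef : R = Algebra.adjoin k {p : Polynomial k | ∃ h ∈ H, p = (X : Polynomial k) ^ h})
    (α : k) (hα : α ≠ 0)
    (a b : ℕ) (haH : a ∈ H) (hbH : b ∈ H) (ha : 0 < a) (hb : 0 < b)
    (hab : Nat.gcd a b = 1) :
    Ideal.span {x : R | ∃ i : Fin v,
        (x : Polynomial k) = C (α ^ (aa i)) - X ^ (aa i)} =
      Ideal.span {x : R | (x : Polynomial k) = C (α ^ a) - X ^ a ∨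
        (x : Polynomial k) = C (α ^ b) - X ^ b} := by
  have hX : ∀ n ∈ H, ((X : Polynomial k) ^ n) ∈ R := by
    intro n hn
    rw [hRdef]
    exact Algebra.subset_adjoin ⟨n, hn, rfl⟩
  have hC : ∀ c : k, (C c : Polynomial k) ∈ R := by
    intro c
    have := R.algebraMap_mem c
    simpa [Polynomial.algebraMap_eq] using this
  have habH : ({a, b} : Set ℕ) ⊆ (H : Set ℕ) := by
    rintro s (rfl | rfl) <;> assumption
  have hrangeH : Set.range aa ⊆ (H : Set ℕ) := by
    rw [← haa]; exact AddSubmonoid.subset_closure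
  -- Membership in the right ideal, for any n ∈ H.
  have key2 : ∀ n ∈ H, ∀ x : R, (x : Polynomial k) = C (α ^ n) - X ^ n →
      x ∈ Ideal.span {x : R | (x : Polynomial k) = C (α ^ a) - X ^ a ∨
        (x : Polynomial k) = C (α ^ b) - X ^ b} := by
    intro n hn x hx
    set I₂ := Ideal.span {x : R | (x : Polynomial k) = C (α ^ a) - X ^ a ∨
        (x : Polynomial k) = C (α ^ b) - X ^ b} with hI₂
    have hgen2 : ∀ s ∈ ({a, b} : Set ℕ), ∀ y : R,
        (y : Polynomial k) = C (α ^ s) - X ^ s → y ∈ I₂ := by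
      rintro s (rfl | rfl) y hy <;> exact Ideal.subset_span (by simp [hy])
    have hclos : ∀ {m : ℕ}, m ∈ AddSubmonoid.closure ({a, b} : Set ℕ) →
        ∀ y : R, (y : Polynomial k) = C (α ^ m) - X ^ m → y ∈ I₂ :=
      fun hm => mem_ideal_of_closure H R hX hC α I₂ _ habH hgen2 hm
    have hNmem : a * b ∈ AddSubmonoid.closure ({a, b} : Set ℕ) :=
      rep_lemma ha hb hab le_rfl
    have hnNmem : a * b + n ∈ AddSubmonoid.closure ({a, b} : Set ℕ) :=
      rep_lemma ha hb hab (by omega)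
    set N := a * b with hN
    have hNH : N ∈ H := AddSubmonoid.closure_le.mpr habH hNmem
    set eN : R := ⟨C (α ^ N) - X ^ N, sub_mem (hC _) (hX N hNH)⟩ with heN
    have heNI : eN ∈ I₂ := hclos hNmem eN rfl
    have hNnH : N + n ∈ H := AddSubmonoid.closure_le.mpr habH hnNmem
    set eNn : R := ⟨C (α ^ (N + n)) - X ^ (N + n), sub_mem (hC _) (hX _ hNnH)⟩ with heNn
    have heNnI : eNn ∈ I₂ := hclos hnNmem eNn rfl
    have hmul : (⟨C (α ^ N), hC _⟩ : R) * x = eNn - (⟨X ^ n, hX n hn⟩ : R) * eN := by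
      apply Subtype.ext
      push_cast
      rw [hx]; show _ = (C (α ^ (N + n)) - X ^ (N + n)) - X ^ n * (C (α ^ N) - X ^ N); rw [key_identity α N n]
      ring
    have hmulI : (⟨C (α ^ N), hC _⟩ : R) * x ∈ I₂ := by
      rw [hmul]
      exact I₂.sub_mem heNnI (I₂.mul_mem_left _ heNI)
    have hxeq : x = (⟨C ((α ^ N)⁻¹), hC _⟩ : R) * ((⟨C (α ^ N), hC _⟩ : R) * x) := by
      apply Subtype.ext
      push_cast
      rw [← mul_assoc, ← C_mul, inv_mul_cancel₀ (pow_ne_zero _ hα), C_1, one_mul]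
    rw [hxeq]
    exact I₂.mul_mem_left _ hmulI
  -- Membership in the left ideal, for any n ∈ H.
  have key1 : ∀ n ∈ H, ∀ x : R, (x : Polynomial k) = C (α ^ n) - X ^ n →
      x ∈ Ideal.span {x : R | ∃ i : Fin v,
        (x : Polynomial k) = C (α ^ (aa i)) - X ^ (aa i)} := by
    intro n hn x hx
    have hn' : n ∈ AddSubmonoid.closure (Set.range aa) := by rw [haa]; exact hn
    refine mem_ideal_of_closure H R hX hC α _ _ hrangeH ?_ hn' x hx
    rintro s ⟨i, rfl⟩ y hy
    exact Ideal.subset_span ⟨i, hy⟩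
  apply le_antisymm
  · rw [Ideal.span_le]
    rintro x ⟨i, hxi⟩
    exact key2 (aa i) (hrangeH ⟨i, rfl⟩) x hxi
  · rw [Ideal.span_le]
    rintro x (hx | hx)
    · exact key1 a haH x hx
    · exact key1 b hbH x hx
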